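/- Let N ≥ 3. Suppose a symmetric N-qubit pure state |ψ⟩ can be written as |ψ⟩ = a |e_1,…,e_N⟩ + b |e_1^⊥,…,e_N^⊥⟩, where a and b are nonzero complex numbers and each (|e_i⟩, |e_i^⊥⟩) is an orthonormal pair of single-qubit vectors. Then there exist an orthonormal pair of single-qubit vectors (|e⟩, |e^⊥⟩) and nonzero complex numbers a', b' with |a'|² + |b'|² = 1 such that, up to a global phase, |ψ⟩ = a' |e⟩^{⊗N} + b' |e^⊥⟩^{⊗N}, i.e., all the single-qubit factors can be chosen equal. -/

import Mathlib

open scoped BigOperators ComplexConjugate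

noncomputable section

/-- A single-qubit unit vector in `ℂ²`. -/
def IsUnitQubit (e : Fin 2 → ℂ) : Prop := ∑ j, Complex.normSq (e j) = 1

/-- Norm-one condition for a multiqubit vector on the register `ι`. -/
def IsUnitState {ι : Type*} [Fintype ι] [DecidableEq ι] (ψ : (ι → Fin 2) → ℂ) : Prop :=
  ∑ x, Complex.normSq (ψ x) = 1

/-- The product state `⊗ᵢ eᵢ`. -/
def prodState {ι : Type*} [Fintype ι] (e : ι → Fin 2 → ℂ) : (ι → Fin 2) → ℂ :=
  fun x => ∏ i, e i (x i)

/-- A pure state is a product state if it is a tensor product of single-qubit unit vectors. -/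
def IsProductState {ι : Type*} [Fintype ι] (ψ : (ι → Fin 2) → ℂ) : Prop :=
  ∃ e : ι → Fin 2 → ℂ, (∀ i, IsUnitQubit (e i)) ∧ ψ = prodState e

/-- A pure state is entangled if it is not a product state. -/
def IsEntangledState {ι : Type*} [Fintype ι] (ψ : (ι → Fin 2) → ℂ) : Prop :=
  ¬ IsProductState ψ

/-- The projector `|v⟩⟨v|` as a matrix. -/
def proj {α : Type*} (v : α → ℂ) : Matrix α α ℂ :=
  Matrix.of fun x y => v x * conj (v y)

/-- A density matrix on the qubit register `ι` is separable if it is a finite convex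
combination of projectors onto product states (and entangled otherwise). -/
def IsSeparableDensity {ι : Type*} [Fintype ι] (ρ : Matrix (ι → Fin 2) (ι → Fin 2) ℂ) : Prop :=
  ∃ (n : ℕ) (w : Fin n → ℝ) (e : Fin n → ι → Fin 2 → ℂ),
    (∀ m, 0 ≤ w m) ∧ (∑ m, w m = 1) ∧ (∀ m i, IsUnitQubit (e m i)) ∧
    ρ = ∑ m, (w m : ℂ) • proj (prodState (e m))

/-- Assemble a full assignment of the `N` qubits from an assignment `x` of the qubits outside
`S` and an assignment `z` of the qubits in `S`. -/
def mergeCompl {N : ℕ} (S : Finset (Fin N)) (x : {i : Fin N // i ∉ S} → Fin 2)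
    (z : {i : Fin N // i ∈ S} → Fin 2) : Fin N → Fin 2 :=
  fun i => if h : i ∈ S then z ⟨i, h⟩ else x ⟨i, h⟩

/-- The reduced density operator `ρ_{¬S}(ψ)`: the partial trace of `|ψ⟩⟨ψ|` over the qubits
in `S`. -/
def reducedState {N : ℕ} (ψ : (Fin N → Fin 2) → ℂ) (S : Finset (Fin N)) :
    Matrix ({i : Fin N // i ∉ S} → Fin 2) ({i : Fin N // i ∉ S} → Fin 2) ℂ :=
  Matrix.of fun x y => ∑ z : {i : Fin N // i ∈ S} → Fin 2,
    ψ (mergeCompl S x z) * conj (ψ (mergeCompl S y z))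

/-- An `N`-qubit state is symmetric if it is invariant under every permutation of the qubits. -/
def IsSymmetricState {N : ℕ} (ψ : (Fin N → Fin 2) → ℂ) : Prop :=
  ∀ π : Equiv.Perm (Fin N), ∀ x : Fin N → Fin 2, ψ (x ∘ π) = ψ x

open Finset in
lemma aux_sum_prod {N : ℕ} (g : Fin N → Fin 2 → ℂ) :
    ∑ x : Fin N → Fin 2, ∏ i, g i (x i) = ∏ i, ∑ j, g i j :=
  (Fintype.prod_sum g).symm

lemma aux_exists_ne_zero {g : Fin 2 → ℂ} (hg : IsUnitQubit g) : ∃ j, g j ≠ 0 := by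
  by_contra h
  push_neg at h
  simp [IsUnitQubit, h] at hg

lemma aux_sum_conj_self {g : Fin 2 → ℂ} (hg : IsUnitQubit g) :
    ∑ t, conj (g t) * g t = 1 := by
  have h : ∀ t : Fin 2, conj (g t) * g t = (Complex.normSq (g t) : ℂ) := fun t => by
    rw [mul_comm, Complex.mul_conj]
  simp only [h]
  rw [← Complex.ofReal_sum, hg, Complex.ofReal_one]

open Finset in
lemma aux_prod_split {N : ℕ} (g : Fin N → Fin 2 → ℂ) {i j k₀ : Fin N}
    (hji : j ≠ i) (hk₀i : k₀ ≠ i) (hk₀j : k₀ ≠ j) {x m : Fin N → Fin 2} {u v t : Fin 2}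
    (hxi : x i = u) (hxj : x j = v) (hxk : x k₀ = t)
    (hm : ∀ k, k ≠ i → k ≠ j → k ≠ k₀ → x k = m k) :
    ∏ k, g k (x k)
      = g i u * g j v * g k₀ t * ∏ k ∈ ((univ.erase i).erase j).erase k₀, g k (m k) := by
  rw [← Finset.mul_prod_erase univ (fun k => g k (x k)) (mem_univ i)]
  rw [← Finset.mul_prod_erase _ (fun k => g k (x k)) (mem_erase.2 ⟨hji, mem_univ j⟩)]
  rw [← Finset.mul_prod_erase _ (fun k => g k (x k))
    (mem_erase.2 ⟨hk₀j, mem_erase.2 ⟨hk₀i, mem_univ k₀⟩⟩)]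
  have hc : ∏ k ∈ ((univ.erase i).erase j).erase k₀, g k (x k)
      = ∏ k ∈ ((univ.erase i).erase j).erase k₀, g k (m k) :=
    Finset.prod_congr rfl fun k hk => by
      simp only [mem_erase] at hk
      rw [hm k hk.2.2.1 hk.2.1 hk.1]
  rw [hc, hxi, hxj, hxk]
  ring

open Finset in
lemma aux_cross {N : ℕ}
    (ψ : (Fin N → Fin 2) → ℂ) (hsym : IsSymmetricState ψ)
    (a b : ℂ) (ha : a ≠ 0)
    (e f : Fin N → Fin 2 → ℂ)
    (hne : ∀ k, ∃ j, e k j ≠ 0)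
    (horthe : ∀ k, ∑ t, conj (e k t) * e k t ≠ 0)
    (horthf : ∀ k, ∑ t, conj (e k t) * f k t = 0)
    (hψ : ∀ x, ψ x = a * ∏ k, e k (x k) + b * ∏ k, f k (x k))
    (i j : Fin N) (hij : i ≠ j) (k₀ : Fin N) (hk₀i : k₀ ≠ i) (hk₀j : k₀ ≠ j)
    (u v : Fin 2) : e i u * e j v = e i v * e j u := by
  choose m hm using hne
  set x : Fin 2 → Fin N → Fin 2 :=
    fun t k => if k = i then u else if k = j then v else if k = k₀ then t else m k with hxdef
  set y : Fin 2 → Fin N → Fin 2 :=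
    fun t k => if k = i then v else if k = j then u else if k = k₀ then t else m k with hydef
  have hcomp : ∀ t, (x t) ∘ (Equiv.swap i j) = y t := by
    intro t
    funext k
    simp only [Function.comp_apply]
    rcases eq_or_ne k i with rfl | hki
    · rw [Equiv.swap_apply_left]
      simp [hxdef, hydef, hij.symm]
    · rcases eq_or_ne k j with rfl | hkj
      · rw [Equiv.swap_apply_right]
        simp [hxdef, hydef, hij, hij.symm]
      · rw [Equiv.swap_apply_of_ne_of_ne hki hkj]
        simp [hxdef, hydef, hki, hkj]
  set Re : ℂ := ∏ k ∈ ((univ.erase i).erase j).erase k₀, e k (m k) with hRedef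
  set Rf : ℂ := ∏ k ∈ ((univ.erase i).erase j).erase k₀, f k (m k) with hRfdef
  have hRe : Re ≠ 0 := Finset.prod_ne_zero_iff.mpr fun k _ => hm k
  have main : ∀ t, a * (e i v * e j u * e k₀ t * Re) + b * (f i v * f j u * f k₀ t * Rf)
      = a * (e i u * e j v * e k₀ t * Re) + b * (f i u * f j v * f k₀ t * Rf) := by
    intro t
    have h1 := hsym (Equiv.swap i j) (x t)
    rw [hcomp t, hψ, hψ] at h1
    have hxi : x t i = u := by simp [hxdef]
    have hxj : x t j = v := by simp [hxdef, hij.symm]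
    have hxk : x t k₀ = t := by simp [hxdef, hk₀i, hk₀j]
    have hxm : ∀ k, k ≠ i → k ≠ j → k ≠ k₀ → x t k = m k := by
      intro k h1' h2' h3'; simp [hxdef, h1', h2', h3']
    have hyi : y t i = v := by simp [hydef]
    have hyj : y t j = u := by simp [hydef, hij.symm]
    have hyk : y t k₀ = t := by simp [hydef, hk₀i, hk₀j]
    have hym : ∀ k, k ≠ i → k ≠ j → k ≠ k₀ → y t k = m k := by
      intro k h1' h2' h3'; simp [hydef, h1', h2', h3']
    rw [aux_prod_split e hij.symm hk₀i hk₀j hxi hxj hxk hxm,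
        aux_prod_split f hij.symm hk₀i hk₀j hxi hxj hxk hxm,
        aux_prod_split e hij.symm hk₀i hk₀j hyi hyj hyk hym,
        aux_prod_split f hij.symm hk₀i hk₀j hyi hyj hyk hym] at h1
    rw [← hRedef, ← hRfdef] at h1
    linear_combination h1
  set Se : ℂ := ∑ t, conj (e k₀ t) * e k₀ t with hSedef
  set Sf : ℂ := ∑ t, conj (e k₀ t) * f k₀ t with hSfdef
  have expand : ∀ A B : ℂ,
      ∑ t, conj (e k₀ t) * (a * (A * e k₀ t * Re) + b * (B * f k₀ t * Rf))
        = a * A * Re * Se + b * B * Rf * Sf := by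
    intro A B
    rw [hSedef, hSfdef, Finset.mul_sum, Finset.mul_sum, ← Finset.sum_add_distrib]
    exact Finset.sum_congr rfl fun t _ => by ring
  have h2 : ∑ t, conj (e k₀ t) * (a * (e i v * e j u * e k₀ t * Re)
        + b * (f i v * f j u * f k₀ t * Rf))
      = ∑ t, conj (e k₀ t) * (a * (e i u * e j v * e k₀ t * Re)
        + b * (f i u * f j v * f k₀ t * Rf)) :=
    Finset.sum_congr rfl fun t _ => by rw [main t]
  rw [expand, expand] at h2
  have hSf : Sf = 0 := horthf k₀
  have hSe : Se ≠ 0 := horthe k₀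
  have h3 : (e i u * e j v) * (a * Re * Se) = (e i v * e j u) * (a * Re * Se) := by
    rw [hSf] at h2
    linear_combination -h2
  exact mul_right_cancel₀ (mul_ne_zero (mul_ne_zero ha hRe) hSe) h3

lemma aux_prop {g h : Fin 2 → ℂ} (hg : ∃ j, g j ≠ 0) (hh : ∃ j, h j ≠ 0)
    (hc : ∀ u v, g u * h v = g v * h u) : ∃ c : ℂ, c ≠ 0 ∧ ∀ u, g u = c * h u := by
  obtain ⟨u₀, hu₀⟩ := hh
  refine ⟨g u₀ / h u₀, ?_, ?_⟩
  · obtain ⟨v₀, hv₀⟩ := hg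
    have hmul : g v₀ * h u₀ ≠ 0 := mul_ne_zero hv₀ hu₀
    rw [hc v₀ u₀] at hmul
    exact div_ne_zero (left_ne_zero_of_mul hmul) hu₀
  · intro u
    rw [div_mul_eq_mul_div, eq_div_iff hu₀, mul_comm (g u₀) (h u)]
    linear_combination hc u u₀

open Finset in
lemma aux_inner_prod {N : ℕ} (u w : Fin 2 → ℂ) :
    ∑ x : Fin N → Fin 2, (∏ i, u (x i)) * conj (∏ i, w (x i))
      = (∑ j, u j * conj (w j)) ^ N := by
  have h1 : ∀ x : Fin N → Fin 2, (∏ i, u (x i)) * conj (∏ i, w (x i))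
      = ∏ i, (u (x i) * conj (w (x i))) := by
    intro x
    rw [map_prod, ← Finset.prod_mul_distrib]
  simp only [h1]
  rw [← Fintype.prod_sum (fun (_ : Fin N) (j : Fin 2) => u j * conj (w j))]
  rw [Finset.prod_const, Finset.card_univ, Fintype.card_fin]

/-- If a symmetric `N`-qubit pure state (`N ≥ 3`) can be written as
`a |e₁,…,e_N⟩ + b |e₁^⊥,…,e_N^⊥⟩` with `a, b` nonzero and each `(e i, f i)` an orthonormal
pair, then all single-qubit factors can be chosen equal: up to a global phase,
`ψ = a' |e⟩^{⊗N} + b' |e^⊥⟩^{⊗N}` with `a', b'` nonzero and `|a'|² + |b'|² = 1`. -/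
theorem symmetric_polygonal_form_equal_factors {N : ℕ} (hN : 3 ≤ N)
    (ψ : (Fin N → Fin 2) → ℂ) (hunit : IsUnitState ψ) (hsym : IsSymmetricState ψ)
    (a b : ℂ) (ha : a ≠ 0) (hb : b ≠ 0)
    (e f : Fin N → Fin 2 → ℂ)
    (he : ∀ i, IsUnitQubit (e i)) (hf : ∀ i, IsUnitQubit (f i))
    (horth : ∀ i, ∑ j, conj (e i j) * f i j = 0)
    (hψ : ψ = fun x => a * prodState e x + b * prodState f x) :
    ∃ (e₀ f₀ : Fin 2 → ℂ) (a' b' c : ℂ),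
      IsUnitQubit e₀ ∧ IsUnitQubit f₀ ∧ (∑ j, conj (e₀ j) * f₀ j = 0) ∧
      a' ≠ 0 ∧ b' ≠ 0 ∧ Complex.normSq a' + Complex.normSq b' = 1 ∧
      ‖c‖ = 1 ∧
      ψ = fun x => c * (a' * prodState (fun _ : Fin N => e₀) x
          + b' * prodState (fun _ : Fin N => f₀) x) := by
  have hN0 : 0 < N := by omega
  set i₀ : Fin N := ⟨0, hN0⟩ with hi₀def
  -- pointwise forms of hψ
  have hψe : ∀ x, ψ x = a * ∏ k, e k (x k) + b * ∏ k, f k (x k) := by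
    intro x; rw [hψ]; rfl
  have hψf : ∀ x, ψ x = b * ∏ k, f k (x k) + a * ∏ k, e k (x k) := by
    intro x; rw [hψe x]; ring
  have horthf : ∀ k, ∑ t, conj (f k t) * e k t = 0 := by
    intro k
    have : ∑ t, conj (f k t) * e k t = conj (∑ t, conj (e k t) * f k t) := by
      rw [map_sum]
      exact Finset.sum_congr rfl fun t _ => by
        rw [map_mul, Complex.conj_conj]; ring
    rw [this, horth k, map_zero]
  -- find a third index
  have hthird : ∀ i : Fin N, i ≠ i₀ → ∃ k₀ : Fin N, k₀ ≠ i ∧ k₀ ≠ i₀ := by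
    intro i _
    by_contra h
    push_neg at h
    have hsub : (Finset.univ : Finset (Fin N)) ⊆ {i, i₀} := by
      intro k _
      rcases eq_or_ne k i with rfl | hki
      · exact Finset.mem_insert_self _ _
      · rw [h k hki]
        exact Finset.mem_insert_of_mem (Finset.mem_singleton_self _)
    have hcard := Finset.card_le_card hsub
    have h2 : ({i, i₀} : Finset (Fin N)).card ≤ 2 := by
      refine le_trans (Finset.card_insert_le _ _) ?_
      simp
    rw [Finset.card_univ, Fintype.card_fin] at hcard
    omega
  -- each e i proportional to e i₀
  have hce : ∀ i, ∃ c : ℂ, c ≠ 0 ∧ ∀ u, e i u = c * e i₀ u := by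
    intro i
    rcases eq_or_ne i i₀ with rfl | hii₀
    · exact ⟨1, one_ne_zero, fun u => (one_mul _).symm⟩
    · obtain ⟨k₀, hk₀i, hk₀i₀⟩ := hthird i hii₀
      refine aux_prop (aux_exists_ne_zero (he i)) (aux_exists_ne_zero (he i₀)) ?_
      intro u v
      exact aux_cross ψ hsym a b ha e f (fun k => aux_exists_ne_zero (he k))
        (fun k => by rw [aux_sum_conj_self (he k)]; exact one_ne_zero)
        horth hψe i i₀ hii₀ k₀ hk₀i hk₀i₀ u v
  have hcf : ∀ i, ∃ c : ℂ, c ≠ 0 ∧ ∀ u, f i u = c * f i₀ u := by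
    intro i
    rcases eq_or_ne i i₀ with rfl | hii₀
    · exact ⟨1, one_ne_zero, fun u => (one_mul _).symm⟩
    · obtain ⟨k₀, hk₀i, hk₀i₀⟩ := hthird i hii₀
      refine aux_prop (aux_exists_ne_zero (hf i)) (aux_exists_ne_zero (hf i₀)) ?_
      intro u v
      exact aux_cross ψ hsym b a hb f e (fun k => aux_exists_ne_zero (hf k))
        (fun k => by rw [aux_sum_conj_self (hf k)]; exact one_ne_zero)
        horthf hψf i i₀ hii₀ k₀ hk₀i hk₀i₀ u v
  choose ce hce0 hcee using hce
  choose cf hcf0 hcff using hcf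
  set a' : ℂ := a * ∏ i, ce i with ha'def
  set b' : ℂ := b * ∏ i, cf i with hb'def
  have ha' : a' ≠ 0 := mul_ne_zero ha (Finset.prod_ne_zero_iff.mpr fun i _ => hce0 i)
  have hb' : b' ≠ 0 := mul_ne_zero hb (Finset.prod_ne_zero_iff.mpr fun i _ => hcf0 i)
  have hψ2 : ∀ x, ψ x = a' * ∏ i, e i₀ (x i) + b' * ∏ i, f i₀ (x i) := by
    intro x
    rw [hψe x]
    have h1 : (∏ i, e i (x i)) = (∏ i, ce i) * ∏ i, e i₀ (x i) := by
      rw [← Finset.prod_mul_distrib]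
      exact Finset.prod_congr rfl fun i _ => hcee i (x i)
    have h2 : (∏ i, f i (x i)) = (∏ i, cf i) * ∏ i, f i₀ (x i) := by
      rw [← Finset.prod_mul_distrib]
      exact Finset.prod_congr rfl fun i _ => hcff i (x i)
    rw [h1, h2, ha'def, hb'def]
    ring
  -- inner products of the extremes
  have hee : ∑ j, e i₀ j * conj (e i₀ j) = 1 := by
    have := aux_sum_conj_self (he i₀)
    rw [← this]
    exact Finset.sum_congr rfl fun t _ => by ring
  have hff : ∑ j, f i₀ j * conj (f i₀ j) = 1 := by
    have := aux_sum_conj_self (hf i₀)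
    rw [← this]
    exact Finset.sum_congr rfl fun t _ => by ring
  have hef : ∑ j, e i₀ j * conj (f i₀ j) = 0 := by
    have heq : ∑ j, e i₀ j * conj (f i₀ j) = conj (∑ j, conj (e i₀ j) * f i₀ j) := by
      rw [map_sum]
      exact Finset.sum_congr rfl fun t _ => by rw [map_mul, Complex.conj_conj]
    rw [heq, horth i₀, map_zero]
  have hfe : ∑ j, f i₀ j * conj (e i₀ j) = 0 := by
    have heq : ∑ j, f i₀ j * conj (e i₀ j) = conj (∑ j, conj (f i₀ j) * e i₀ j) := by
      rw [map_sum]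
      exact Finset.sum_congr rfl fun t _ => by rw [map_mul, Complex.conj_conj]
    rw [heq, horthf i₀, map_zero]
  -- norm computation
  have hC : ∑ x : Fin N → Fin 2, ψ x * conj (ψ x) = 1 := by
    have h : ∀ x, ψ x * conj (ψ x) = (Complex.normSq (ψ x) : ℂ) := fun x =>
      Complex.mul_conj _
    simp only [h]
    rw [← Complex.ofReal_sum, hunit, Complex.ofReal_one]
  have hexp : ∀ x : Fin N → Fin 2,
      ψ x * conj (ψ x)
        = a' * conj a' * ((∏ i, e i₀ (x i)) * conj (∏ i, e i₀ (x i)))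
          + a' * conj b' * ((∏ i, e i₀ (x i)) * conj (∏ i, f i₀ (x i)))
          + b' * conj a' * ((∏ i, f i₀ (x i)) * conj (∏ i, e i₀ (x i)))
          + b' * conj b' * ((∏ i, f i₀ (x i)) * conj (∏ i, f i₀ (x i))) := by
    intro x
    rw [hψ2 x]
    simp only [map_add, map_mul]
    ring
  rw [Finset.sum_congr rfl fun x _ => hexp x] at hC
  simp only [Finset.sum_add_distrib, ← Finset.mul_sum] at hC
  rw [aux_inner_prod, aux_inner_prod, aux_inner_prod, aux_inner_prod,
    hee, hff, hef, hfe, one_pow, zero_pow (by omega : N ≠ 0)] at hC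
  have hnorm : Complex.normSq a' + Complex.normSq b' = 1 := by
    have hcast : ((Complex.normSq a' + Complex.normSq b' : ℝ) : ℂ) = 1 := by
      push_cast
      rw [← Complex.mul_conj, ← Complex.mul_conj]
      linear_combination hC
    exact_mod_cast hcast
  refine ⟨e i₀, f i₀, a', b', 1, he i₀, hf i₀, horth i₀, ha', hb', hnorm, by simp, ?_⟩
  funext x
  rw [hψ2 x]
  simp only [prodState, one_mul]
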